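/- Let D₀ be an oriented graph on n₀ vertices with minimum outdegree d₀ that contains no Seymour vertex. Then for every integer N ≥ 3 there exists a strongly-connected oriented graph D on N·n₀ vertices with minimum outdegree δ⁺(D) = d₀ + n₀ that contains no Seymour vertex. -/

import Mathlib

open Filter

/-- The outneighbourhood `N1(v)` of `v` in the digraph with arc relation `D`. -/
def outNbr {V : Type*} (D : V → V → Prop) (v : V) : Set V := {w | w ≠ v ∧ D v w}

/-- The inneighbourhood `N⁻(v)` of `v`. -/
def inNbr {V : Type*} (D : V → V → Prop) (v : V) : Set V := {w | w ≠ v ∧ D w v}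

/-- The second outneighbourhood `N2(v)` of `v`. -/
def outNbr2 {V : Type*} (D : V → V → Prop) (v : V) : Set V :=
  {w | w ∉ insert v (outNbr D v) ∧ ∃ u ∈ outNbr D v, D u w}

/-- `v` is a Seymour vertex: `|N2(v)| ≥ |N1(v)|`. -/
def SeymourVertex {V : Type*} (D : V → V → Prop) (v : V) : Prop :=
  (outNbr D v).ncard ≤ (outNbr2 D v).ncard

/-- `v` is a Sullivan vertex: `|N2(v)| ≥ |N⁻(v)|`. -/
def SullivanVertex {V : Type*} (D : V → V → Prop) (v : V) : Prop :=
  (inNbr D v).ncard ≤ (outNbr2 D v).ncard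

/-- An oriented graph: an asymmetric (hence irreflexive and loopless) arc relation. -/
def OrientedGraph {V : Type*} (D : V → V → Prop) : Prop := ∀ u v, D u v → ¬ D v u

/-- `D` is an orientation of the simple graph `G`. -/
def Orients {V : Type*} (D : V → V → Prop) (G : SimpleGraph V) : Prop :=
  OrientedGraph D ∧ ∀ u v, G.Adj u v ↔ (D u v ∨ D v u)

/-- Strong connectivity of a digraph: every vertex reaches every other by a directed path. -/
def StrongConn {V : Type*} (D : V → V → Prop) : Prop := ∀ u v, Relation.ReflTransGen D u v

/-- The number of edges of `G` with one endpoint in `A` and the other in `B`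
(counted via ordered pairs; equals `e(A,B)` for disjoint `A`, `B`). -/
noncomputable def eBtw {V : Type*} (G : SimpleGraph V) (A B : Set V) : ℕ :=
  {p : V × V | p.1 ∈ A ∧ p.2 ∈ B ∧ G.Adj p.1 p.2}.ncard

/-- The number of edges of `G` with both endpoints in `A`. -/
noncomputable def eIn {V : Type*} (G : SimpleGraph V) (A : Set V) : ℕ :=
  {e | e ∈ G.edgeSet ∧ ∀ v ∈ e, v ∈ A}.ncard

open scoped Classical in
/-- The probability that the binomial random graph `G(n,p)` satisfies the property `P`. -/
noncomputable def gnpProb (n : ℕ) (p : ℝ) (P : SimpleGraph (Fin n) → Prop) : ℝ :=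
  ∑ G : SimpleGraph (Fin n),
    if P G then p ^ G.edgeSet.ncard * (1 - p) ^ (n.choose 2 - G.edgeSet.ncard) else 0

section blow

variable {N n₀ : ℕ} {D₀ : Fin n₀ → Fin n₀ → Prop}

/-- Blow-up of `D₀` along a consistently oriented `N`-cycle. -/
def blowP (N n₀ : ℕ) [NeZero N] (D₀ : Fin n₀ → Fin n₀ → Prop) :
    Fin N × Fin n₀ → Fin N × Fin n₀ → Prop :=
  fun u w => (u.1 = w.1 ∧ D₀ u.2 w.2) ∨ w.1 = u.1 + 1

lemma fin1 [NeZero N] (hN : 3 ≤ N) (i : Fin N) : i + 1 ≠ i := by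
  have h1 : (1 : Fin N).val = 1 := by
    rw [Fin.val_one' N, Nat.mod_eq_of_lt (by omega)]
  have k1 : (1 : Fin N) ≠ 0 := by
    intro h; have := congrArg Fin.val h; rw [h1, Fin.val_zero] at this; omega
  intro h
  have : i + 1 = i + 0 := by rwa [add_zero]
  exact k1 (add_left_cancel this)

lemma fin2 [NeZero N] (hN : 3 ≤ N) (i : Fin N) : i + 1 + 1 ≠ i := by
  have h1 : (1 : Fin N).val = 1 := by
    rw [Fin.val_one' N, Nat.mod_eq_of_lt (by omega)]
  have h2 : (1 + 1 : Fin N).val = 2 := by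
    rw [Fin.val_add, h1, Nat.mod_eq_of_lt (by omega)]
  have k2 : (1 + 1 : Fin N) ≠ 0 := by
    intro h; have := congrArg Fin.val h; rw [h2, Fin.val_zero] at this; omega
  intro h
  have : i + (1 + 1) = i + 0 := by rwa [add_zero, ← add_assoc]
  exact k2 (add_left_cancel this)

lemma ncard_union_prod (i j : Fin N) (hij : i ≠ j) (S T : Set (Fin n₀)) :
    (({i} ×ˢ S) ∪ ({j} ×ˢ T)).ncard = S.ncard + T.ncard := by
  have inj : ∀ k : Fin N, Function.Injective (Prod.mk k : Fin n₀ → Fin N × Fin n₀) :=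
    fun k b c h => congrArg Prod.snd h
  have hdis : Disjoint ({i} ×ˢ S) ({j} ×ˢ T) := by
    rw [Set.disjoint_left]
    rintro ⟨x, y⟩ ⟨rfl, -⟩ ⟨rfl, -⟩
    exact hij rfl
  rw [Set.ncard_union_eq hdis (Set.toFinite _) (Set.toFinite _), Set.singleton_prod,
    Set.singleton_prod, Set.ncard_image_of_injective _ (inj i),
    Set.ncard_image_of_injective _ (inj j)]

lemma outNbr_blow [NeZero N] (hN : 3 ≤ N) (i : Fin N) (a : Fin n₀) :
    outNbr (blowP N n₀ D₀) (i, a) =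
      ({i} ×ˢ outNbr D₀ a) ∪ ({i + 1} ×ˢ (Set.univ : Set (Fin n₀))) := by
  ext ⟨j, b⟩
  simp only [outNbr, blowP, Set.mem_setOf_eq, Set.mem_union, Set.mem_prod,
    Set.mem_singleton_iff, Set.mem_univ, and_true, ne_eq]
  constructor
  · rintro ⟨hne, ⟨hij, hab⟩ | hj⟩
    · refine Or.inl ⟨hij.symm, ?_, hab⟩
      intro hba
      exact hne (by rw [← hij, hba])
    · exact Or.inr hj
  · rintro (⟨hji, hba, hab⟩ | hj)
    · subst hji
      exact ⟨fun h => hba (congrArg Prod.snd h), Or.inl ⟨rfl, hab⟩⟩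
    · subst hj
      exact ⟨fun h => fin1 hN i (congrArg Prod.fst h), Or.inr rfl⟩

lemma outNbr2_blow [NeZero N] (hN : 3 ≤ N) (i : Fin N) (a : Fin n₀) :
    outNbr2 (blowP N n₀ D₀) (i, a) =
      ({i} ×ˢ outNbr2 D₀ a) ∪ ({i + 1 + 1} ×ˢ (Set.univ : Set (Fin n₀))) := by
  ext ⟨j, b⟩
  constructor
  · rintro ⟨hnot, ⟨ui, uc⟩, hu, hP⟩
    rw [outNbr_blow hN] at hnot hu
    simp only [Set.mem_union, Set.mem_prod, Set.mem_singleton_iff, Set.mem_univ,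
      and_true] at hu
    simp only [blowP] at hP
    rcases hu with ⟨hui, huc⟩ | hui
    · subst hui
      rcases hP with ⟨hje, hcb⟩ | hj
      · -- j = ui = i
        refine Or.inl (Set.mk_mem_prod hje.symm ?_)
        refine ⟨?_, ⟨uc, huc, hcb⟩⟩
        intro hb
        apply hnot
        rcases hb with rfl | hb
        · exact Set.mem_insert_iff.mpr (Or.inl (by rw [hje]))
        · exact Set.mem_insert_iff.mpr (Or.inr (Set.mem_union_left _
            (Set.mk_mem_prod hje.symm hb)))
      · exact absurd (hnot) (by
          intro h; exact h (Set.mem_insert_iff.mpr (Or.inr (Set.mem_union_right _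
            (Set.mk_mem_prod hj trivial)))))
    · subst hui
      rcases hP with ⟨hje, hcb⟩ | hj
      · exact absurd (hnot) (by
          intro h; exact h (Set.mem_insert_iff.mpr (Or.inr (Set.mem_union_right _
            (Set.mk_mem_prod hje.symm trivial)))))
      · exact Or.inr (Set.mk_mem_prod hj trivial)
  · intro h
    simp only [Set.mem_union, Set.mem_prod, Set.mem_singleton_iff, Set.mem_univ,
      and_true] at h
    rcases h with ⟨hji, hb⟩ | hj
    · obtain ⟨hbnot, c, hc, hcb⟩ := hb
      refine ⟨?_, ⟨(i, c), ?_, ?_⟩⟩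
      · rw [outNbr_blow hN]
        intro hmem
        rcases Set.mem_insert_iff.mp hmem with heq | hmem2
        · exact hbnot (Set.mem_insert_iff.mpr (Or.inl (congrArg Prod.snd heq)))
        · rcases hmem2 with ⟨-, hbN1⟩ | ⟨hjj, -⟩
          · exact hbnot (Set.mem_insert_iff.mpr (Or.inr hbN1))
          · exact fin1 hN i (by rw [← hjj, hji])
      · rw [outNbr_blow hN]
        exact Set.mem_union_left _ (Set.mk_mem_prod rfl hc)
      · exact Or.inl ⟨hji.symm, hcb⟩
    · refine ⟨?_, ⟨(i + 1, a), ?_, ?_⟩⟩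
      · rw [outNbr_blow hN]
        intro hmem
        rcases Set.mem_insert_iff.mp hmem with heq | hmem2
        · exact fin2 hN i (by rw [← hj]; exact congrArg Prod.fst heq)
        · rcases hmem2 with ⟨hjj, -⟩ | ⟨hjj, -⟩
          · exact fin2 hN i (by rw [← hj]; exact hjj)
          · exact fin1 hN (i + 1) (by rw [← hj]; exact hjj)
      · rw [outNbr_blow hN]
        exact Set.mem_union_right _ (Set.mk_mem_prod rfl trivial)
      · exact Or.inr hj

lemma ncard_outNbr_blow [NeZero N] (hN : 3 ≤ N) (v : Fin N × Fin n₀) :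
    (outNbr (blowP N n₀ D₀) v).ncard = (outNbr D₀ v.2).ncard + n₀ := by
  obtain ⟨i, a⟩ := v
  rw [outNbr_blow hN, ncard_union_prod i (i + 1) (fin1 hN i).symm, Set.ncard_univ]
  simp

lemma ncard_outNbr2_blow [NeZero N] (hN : 3 ≤ N) (v : Fin N × Fin n₀) :
    (outNbr2 (blowP N n₀ D₀) v).ncard = (outNbr2 D₀ v.2).ncard + n₀ := by
  obtain ⟨i, a⟩ := v
  rw [outNbr2_blow hN, ncard_union_prod i (i + 1 + 1) (fin2 hN i).symm, Set.ncard_univ]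
  simp

lemma blow_oriented [NeZero N] (hN : 3 ≤ N) (hD₀ : OrientedGraph D₀) :
    OrientedGraph (blowP N n₀ D₀) := by
  rintro ⟨i, a⟩ ⟨j, b⟩ h h'
  simp only [blowP] at h h'
  rcases h with ⟨hij, hab⟩ | hj
  · rcases h' with ⟨hji, hba⟩ | hi
    · exact hD₀ a b hab hba
    · exact (fin1 hN j).symm (hij.symm.trans hi)
  · rcases h' with ⟨hji, hba⟩ | hi
    · exact (fin1 hN i).symm (hji.symm.trans hj)
    · exact (fin2 hN i).symm (hj ▸ hi)

open Fin.NatCast in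
lemma blow_reach [NeZero N] (hN : 3 ≤ N) (k : ℕ) :
    ∀ (i : Fin N) (a b : Fin n₀),
      Relation.ReflTransGen (blowP N n₀ D₀) (i, a) (i + ((k + 1 : ℕ) : Fin N), b) := by
  induction k with
  | zero =>
    intro i a b
    refine Relation.ReflTransGen.single (Or.inr ?_)
    simp
  | succ k ih =>
    intro i a b
    have hc : ((k + 1 + 1 : ℕ) : Fin N) = ((k + 1 : ℕ) : Fin N) + 1 := by
      push_cast; ring
    rw [hc, ← add_assoc]
    exact (ih i a a).tail (Or.inr rfl)

open Fin.NatCast in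
lemma blow_strong [NeZero N] (hN : 3 ≤ N) : StrongConn (blowP N n₀ D₀) := by
  rintro ⟨i, a⟩ ⟨j, b⟩
  by_cases hd : j - i = 0
  · have hji : j = i := sub_eq_zero.mp hd
    subst hji
    by_cases hab : a = b
    · subst hab; exact Relation.ReflTransGen.refl
    · have := blow_reach (D₀ := D₀) hN (N - 1) j a b
      have hc : ((N - 1 + 1 : ℕ) : Fin N) = 0 := by
        rw [Nat.sub_add_cancel (by omega), Fin.natCast_self]
      rwa [hc, add_zero] at this
  · have hv : (j - i).val ≠ 0 := fun h => hd (Fin.ext (by rw [h]; simp))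
    have := blow_reach (D₀ := D₀) hN ((j - i).val - 1) i a b
    have hc : (((j - i).val - 1 + 1 : ℕ) : Fin N) = j - i := by
      rw [Nat.sub_add_cancel (by omega), Fin.cast_val_eq_self]
    rwa [hc, add_sub_cancel] at this

end blow

section transport

variable {V W : Type*} (e : V ≃ W) (P : W → W → Prop)

lemma outNbr_comap (x : V) :
    outNbr (fun a b => P (e a) (e b)) x = e ⁻¹' outNbr P (e x) := by
  ext y
  simp only [outNbr, Set.mem_setOf_eq, Set.mem_preimage, ne_eq,
    EmbeddingLike.apply_eq_iff_eq]

lemma ncard_preimage_equiv (S : Set W) : (e ⁻¹' S).ncard = S.ncard := by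
  rw [← Equiv.symm_symm e, ← Equiv.image_eq_preimage_symm]
  exact Set.ncard_image_of_injective S e.symm.injective

lemma outNbr2_comap (x : V) :
    outNbr2 (fun a b => P (e a) (e b)) x = e ⁻¹' outNbr2 P (e x) := by
  ext y
  simp only [outNbr2, Set.mem_setOf_eq, Set.mem_preimage, Set.mem_insert_iff,
    outNbr_comap, EmbeddingLike.apply_eq_iff_eq]
  constructor
  · rintro ⟨hnot, u, hu, hP⟩
    exact ⟨hnot, e u, hu, hP⟩
  · rintro ⟨hnot, u, hu, hP⟩
    exact ⟨hnot, e.symm u, by simpa using hu, by simpa using hP⟩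

lemma strongConn_comap (h : StrongConn P) : StrongConn (fun a b => P (e a) (e b)) := by
  intro x y
  have h1 := h (e x) (e y)
  have key : ∀ u w, Relation.ReflTransGen P u w →
      Relation.ReflTransGen (fun a b => P (e a) (e b)) (e.symm u) (e.symm w) := by
    intro u w h'
    induction h' with
    | refl => exact Relation.ReflTransGen.refl
    | tail _ hstep ih => exact ih.tail (by simpa using hstep)
  simpa using key (e x) (e y) h1

end transport

/-- blowing up a counterexample `D₀` (with `n₀` vertices and minimum
outdegree `d₀`) along a consistently-oriented `N`-cycle yields, for every `N ≥ 3`,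
a strongly-connected counterexample on `N·n₀` vertices with minimum outdegree `d₀ + n₀`. -/
theorem stmt_5 (n₀ d₀ : ℕ) (D₀ : Fin n₀ → Fin n₀ → Prop) (hD₀ : OrientedGraph D₀)
    (hno : ∀ v, ¬ SeymourVertex D₀ v)
    (hlb : ∀ v, d₀ ≤ (outNbr D₀ v).ncard) (hex : ∃ v, (outNbr D₀ v).ncard = d₀)
    (N : ℕ) (hN : 3 ≤ N) :
    ∃ D : Fin (N * n₀) → Fin (N * n₀) → Prop,
      OrientedGraph D ∧ StrongConn D ∧
      (∀ v, d₀ + n₀ ≤ (outNbr D v).ncard) ∧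
      (∃ v, (outNbr D v).ncard = d₀ + n₀) ∧
      ∀ v, ¬ SeymourVertex D v := by
  haveI : NeZero N := ⟨by omega⟩
  obtain ⟨v₀, hv₀⟩ := hex
  let e : Fin (N * n₀) ≃ Fin N × Fin n₀ := finProdFinEquiv.symm
  refine ⟨fun x y => blowP N n₀ D₀ (e x) (e y), ?_, ?_, ?_, ?_, ?_⟩
  · intro x y h h'
    exact blow_oriented hN hD₀ (e x) (e y) h h'
  · exact strongConn_comap e _ (blow_strong hN)
  · intro x
    rw [outNbr_comap, ncard_preimage_equiv, ncard_outNbr_blow hN]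
    have := hlb (e x).2
    omega
  · refine ⟨e.symm (0, v₀), ?_⟩
    rw [outNbr_comap, ncard_preimage_equiv, ncard_outNbr_blow hN,
      Equiv.apply_symm_apply]
    rw [hv₀]
  · intro x hS
    unfold SeymourVertex at hS
    rw [outNbr_comap, outNbr2_comap, ncard_preimage_equiv, ncard_preimage_equiv,
      ncard_outNbr_blow hN, ncard_outNbr2_blow hN] at hS
    have h1 := hno (e x).2
    unfold SeymourVertex at h1
    omega
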